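/- arXiv:0903.2836 — 2 statements merged into one kernel-verified Lean document; each statement's English description precedes it below -/
import Mathlib

section
/- Let K₁ and K₂ be nonempty closed convex sets in ℝⁿ and let m be an integer with 3 ≤ m ≤ n − 1. If for every m-dimensional linear subspace L of ℝⁿ the orthogonal projections π_L(K₁) and π_L(K₂) are homothetic, then the linearity spaces of K₁ and K₂ coincide: lin K₁ = lin K₂. -/
/-- Nonempty sets `X₁` and `X₂` in `ℝⁿ` are *homothetic* provided
`X₁ = z + λ • X₂` for some point `z` and some scalar `λ ≠ 0`. -/
def Homothetic {n : ℕ} (X₁ X₂ : Set (EuclideanSpace ℝ (Fin n))) : Prop :=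
  ∃ (z : EuclideanSpace ℝ (Fin n)) (l : ℝ), l ≠ 0 ∧ X₁ = (fun x => z + l • x) '' X₂

/-- The recession cone of a set `K ⊆ ℝⁿ`:
`rec K = {y : x + α • y ∈ K for all x ∈ K and all α ≥ 0}`. -/
def recCone {n : ℕ} (K : Set (EuclideanSpace ℝ (Fin n))) :
    Set (EuclideanSpace ℝ (Fin n)) :=
  {y | ∀ x ∈ K, ∀ α : ℝ, 0 ≤ α → x + α • y ∈ K}

/-- The linearity space of a set `K ⊆ ℝⁿ`: `lin K = (rec K) ∩ (-rec K)`. -/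
def linSpace {n : ℕ} (K : Set (EuclideanSpace ℝ (Fin n))) :
    Set (EuclideanSpace ℝ (Fin n)) :=
  recCone K ∩ {y | -y ∈ recCone K}

open Module Submodule

section Aux

variable {E : Type*} [NormedAddCommGroup E] [InnerProductSpace ℝ E] [FiniteDimensional ℝ E]

/-- Extend a submodule to one of prescribed finrank. -/
lemma aux_exists_le_finrank_eq (m : ℕ) (hm : m ≤ finrank ℝ E) :
    ∀ k (p : Submodule ℝ E), finrank ℝ p + k = m → ∃ W, p ≤ W ∧ finrank ℝ W = m := by
  intro k
  induction k with
  | zero => intro p hp; exact ⟨p, le_rfl, by simpa using hp⟩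
  | succ k ih =>
    intro p hp
    have hlt : finrank ℝ p < finrank ℝ E := by omega
    obtain ⟨x, hx⟩ := Submodule.exists_of_finrank_lt p hlt
    have hx0 : x ≠ 0 := by
      intro h; exact hx 1 one_ne_zero (by simp [h])
    have hdisj : p ⊓ (ℝ ∙ x) = ⊥ := by
      rw [Submodule.eq_bot_iff]
      rintro v ⟨hv1, hv2⟩
      obtain ⟨r, rfl⟩ := Submodule.mem_span_singleton.mp hv2
      by_contra h
      exact hx r (fun hr => h (by simp [hr])) hv1
    have hfr : finrank ℝ ↥(p ⊔ (ℝ ∙ x)) = finrank ℝ p + 1 := by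
      have := Submodule.finrank_sup_add_finrank_inf_eq p (ℝ ∙ x)
      rw [hdisj, finrank_bot, finrank_span_singleton hx0] at this
      omega
    obtain ⟨W, hW1, hW2⟩ := ih (p ⊔ (ℝ ∙ x)) (by omega)
    exact ⟨W, le_trans le_sup_left hW1, hW2⟩

end Aux

section RecLemmas

variable {n : ℕ} {X X₁ X₂ K : Set (EuclideanSpace ℝ (Fin n))}
  {y : EuclideanSpace ℝ (Fin n)}

/-- Membership in the recession cone of a homothetic image. -/
lemma recCone_homothety_mem {z : EuclideanSpace ℝ (Fin n)} {l : ℝ} (hl : l ≠ 0) :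
    y ∈ recCone ((fun x => z + l • x) '' X) ↔ l⁻¹ • y ∈ recCone X := by
  constructor
  · intro h x hx α hα
    have := h (z + l • x) ⟨x, hx, rfl⟩ α hα
    obtain ⟨x', hx', hx'eq⟩ := this
    have : x' = x + α • l⁻¹ • y := by
      have h1 : l • x' = l • x + α • y := by
        have := hx'eq
        simpa [add_assoc] using this
      have h2 : x' = l⁻¹ • (l • x + α • y) := by
        rw [← h1, smul_smul, inv_mul_cancel₀ hl, one_smul]
      rw [h2, smul_add, smul_smul, inv_mul_cancel₀ hl, one_smul, smul_comm]
    rwa [this] at hx'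
  · intro h p hp α hα
    obtain ⟨x, hx, rfl⟩ := hp
    refine ⟨x + α • l⁻¹ • y, h x hx α hα, ?_⟩
    simp only [smul_add, smul_smul]
    have hcoef : l * (α * l⁻¹) = α := by
      rw [mul_comm α, ← mul_assoc, mul_inv_cancel₀ hl, one_mul]
    rw [hcoef, add_assoc]

lemma recCone_smul_pos {c : ℝ} (hc : 0 < c) (hy : y ∈ recCone X) : c • y ∈ recCone X := by
  intro x hx α hα
  have := hy x hx (α * c) (mul_nonneg hα hc.le)
  simpa [smul_smul] using this

lemma linSpace_neg_mem (hy : y ∈ linSpace X) : -y ∈ linSpace X := ⟨hy.2, by simpa using hy.1⟩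

lemma linSpace_smul {c : ℝ} (hc : c ≠ 0) (hy : y ∈ linSpace X) : c • y ∈ linSpace X := by
  rcases lt_or_gt_of_ne hc with h | h
  · have h1 : (0:ℝ) < -c := by linarith
    have ha : (-c) • (-y) ∈ recCone X := recCone_smul_pos h1 (linSpace_neg_mem hy).1
    have hb : (-c) • y ∈ recCone X := recCone_smul_pos h1 hy.1
    constructor
    · simpa [neg_smul, smul_neg] using ha
    · show -(c • y) ∈ recCone X
      simpa [neg_smul] using hb
  · exact ⟨recCone_smul_pos h hy.1, by simpa using recCone_smul_pos h hy.2⟩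

/-- Linearity spaces of homothetic sets coincide. -/
lemma linSpace_homothety (h : Homothetic X₁ X₂) : linSpace X₁ = linSpace X₂ := by
  obtain ⟨z, l, hl, rfl⟩ := h
  ext y
  constructor
  · rintro ⟨h1, h2⟩
    have h1' := (recCone_homothety_mem hl).mp h1
    have h2' := (recCone_homothety_mem hl).mp h2
    have : (l⁻¹ • y) ∈ linSpace X₂ := ⟨h1', by simpa [smul_neg] using h2'⟩
    have := linSpace_smul hl this
    rwa [smul_smul, mul_inv_cancel₀ hl, one_smul] at this
  · intro hy
    have hy' := linSpace_smul (inv_ne_zero hl) hy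
    exact ⟨(recCone_homothety_mem hl).mpr hy'.1,
      (recCone_homothety_mem hl).mpr (by simpa [smul_neg] using hy'.2)⟩

/-- Projections of recession directions are recession directions of the projection. -/
lemma proj_mem_recCone_image (L : Submodule ℝ (EuclideanSpace ℝ (Fin n)))
    (hy : y ∈ recCone K) :
    (L.orthogonalProjectionOnto y : EuclideanSpace ℝ (Fin n)) ∈
      recCone ((fun x => (L.orthogonalProjectionOnto x : EuclideanSpace ℝ (Fin n))) '' K) := by
  rintro p ⟨x, hx, rfl⟩ α hα
  refine ⟨x + α • y, hy x hx α hα, ?_⟩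
  simp [map_add, map_smul]

/-- If `y` is not a recession direction of a closed convex set `K`, then for a suitable
subspace `L` of any admissible dimension, the projection of `y` is not a recession
direction of the projection of `K`. -/
lemma exists_proj_not_mem_recCone (m : ℕ) (hm : 1 ≤ m) (hmn : m ≤ finrank ℝ (EuclideanSpace ℝ (Fin n)))
    (hcl : IsClosed K) (hcv : Convex ℝ K) (hy : y ∉ recCone K) :
    ∃ L : Submodule ℝ (EuclideanSpace ℝ (Fin n)), finrank ℝ L = m ∧
      (L.orthogonalProjectionOnto y : EuclideanSpace ℝ (Fin n)) ∉
        recCone ((fun x => (L.orthogonalProjectionOnto x : EuclideanSpace ℝ (Fin n))) '' K) := by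
  simp only [recCone, Set.mem_setOf_eq, not_forall] at hy
  obtain ⟨x, hx, α, hα, hq⟩ := hy
  obtain ⟨f, u, hfu⟩ := geometric_hahn_banach_closed_point hcv hcl hq
  set v := (InnerProductSpace.toDual ℝ (EuclideanSpace ℝ (Fin n))).symm f with hv
  have hfv : ∀ w, f w = inner ℝ v w := fun w => (InnerProductSpace.toDual_symm_apply).symm
  -- extend span {v} to an m-dimensional subspace
  have hsp : finrank ℝ (ℝ ∙ v) ≤ m := by
    rcases eq_or_ne v 0 with h | h
    · rw [h, Submodule.span_zero_singleton]; simp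
    · rw [finrank_span_singleton h]; exact hm
  obtain ⟨L, hL1, hL2⟩ := aux_exists_le_finrank_eq m hmn (m - finrank ℝ (ℝ ∙ v)) (ℝ ∙ v)
    (by omega)
  have hvL : v ∈ L := hL1 (Submodule.mem_span_singleton_self v)
  refine ⟨L, hL2, fun hcon => ?_⟩
  -- v-inner is preserved by the projection
  have hinner : ∀ w : EuclideanSpace ℝ (Fin n),
      (inner ℝ v ((L.orthogonalProjectionOnto w : EuclideanSpace ℝ (Fin n))) : ℝ) = inner ℝ v w := by
    intro w
    have h0 : (inner ℝ v (w - (L.orthogonalProjectionOnto w : EuclideanSpace ℝ (Fin n))) : ℝ) = 0 :=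
      Submodule.inner_right_of_mem_orthogonal hvL (sub_starProjection_mem_orthogonal (K := L) w)
    rw [inner_sub_right] at h0
    linarith
  have hmem := hcon (L.orthogonalProjectionOnto x : EuclideanSpace ℝ (Fin n)) ⟨x, hx, rfl⟩ α hα
  obtain ⟨a, ha, haeq⟩ := hmem
  have h1 : f a < u := hfu.1 a ha
  have h2 : u < f (x + α • y) := hfu.2
  have h3 : (inner ℝ v a : ℝ) = inner ℝ v (x + α • y) := by
    have hh := congrArg (fun w : EuclideanSpace ℝ (Fin n) => (inner ℝ v w : ℝ)) haeq
    simp only [inner_add_right, inner_smul_right, hinner] at hh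
    simp only [inner_add_right, inner_smul_right]
    exact hh
  rw [hfv] at h1 h2
  rw [h3] at h1
  linarith

/-- Characterization of the linearity space via projections. -/
lemma mem_linSpace_iff_proj (m : ℕ) (hm : 1 ≤ m)
    (hmn : m ≤ finrank ℝ (EuclideanSpace ℝ (Fin n)))
    (hcl : IsClosed K) (hcv : Convex ℝ K) :
    y ∈ linSpace K ↔ ∀ L : Submodule ℝ (EuclideanSpace ℝ (Fin n)), finrank ℝ L = m →
      (L.orthogonalProjectionOnto y : EuclideanSpace ℝ (Fin n)) ∈
        linSpace ((fun x => (L.orthogonalProjectionOnto x : EuclideanSpace ℝ (Fin n))) '' K) := by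
  constructor
  · intro hy L hL
    refine ⟨proj_mem_recCone_image L hy.1, ?_⟩
    have := proj_mem_recCone_image L hy.2
    simpa using this
  · intro h
    by_contra hy
    have : y ∉ recCone K ∨ -y ∉ recCone K := by
      by_contra hc
      push_neg at hc
      exact hy ⟨hc.1, hc.2⟩
    rcases this with h1 | h1
    · obtain ⟨L, hL, hnot⟩ := exists_proj_not_mem_recCone m hm hmn hcl hcv h1
      exact hnot (h L hL).1
    · obtain ⟨L, hL, hnot⟩ := exists_proj_not_mem_recCone m hm hmn hcl hcv h1
      have := (h L hL).2
      simp only [Set.mem_setOf_eq, map_neg] at hnot ⊢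
      exact hnot (by simpa using this)

end RecLemmas

/-- If the nonempty closed convex sets `K₁, K₂ ⊆ ℝⁿ` have homothetic orthogonal
projections on every `m`-dimensional linear subspace of `ℝⁿ`, where `3 ≤ m ≤ n - 1`,
then their linearity spaces coincide. -/
theorem linSpace_eq_of_projections_homothetic
    (n m : ℕ) (hm₁ : 3 ≤ m) (hm₂ : m ≤ n - 1)
    (K₁ K₂ : Set (EuclideanSpace ℝ (Fin n)))
    (hne₁ : K₁.Nonempty) (hne₂ : K₂.Nonempty)
    (hcl₁ : IsClosed K₁) (hcl₂ : IsClosed K₂)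
    (hcv₁ : Convex ℝ K₁) (hcv₂ : Convex ℝ K₂)
    (hproj : ∀ L : Submodule ℝ (EuclideanSpace ℝ (Fin n)),
      Module.finrank ℝ L = m →
      Homothetic ((fun x => (L.orthogonalProjectionOnto x : EuclideanSpace ℝ (Fin n))) '' K₁)
        ((fun x => (L.orthogonalProjectionOnto x : EuclideanSpace ℝ (Fin n))) '' K₂)) :
    linSpace K₁ = linSpace K₂ := by
  have hm : 1 ≤ m := by omega
  have hmn : m ≤ finrank ℝ (EuclideanSpace ℝ (Fin n)) := by
    rw [finrank_euclideanSpace, Fintype.card_fin]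
    omega
  ext y
  rw [mem_linSpace_iff_proj m hm hmn hcl₁ hcv₁, mem_linSpace_iff_proj m hm hmn hcl₂ hcv₂]
  constructor
  · intro h L hL
    rw [← linSpace_homothety (hproj L hL)]
    exact h L hL
  · intro h L hL
    rw [linSpace_homothety (hproj L hL)]
    exact h L hL
end

section
/- Let K₁ and K₂ be nonempty closed convex sets in ℝⁿ and let m be an integer with 1 ≤ m ≤ n − 1. Suppose K₁ is unbounded and for every m-dimensional linear subspace L of ℝⁿ the orthogonal projections π_L(K₁) and π_L(K₂) are homothetic. Then K₂ is unbounded. -/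
set_option maxHeartbeats 1000000

open Module

lemma exists_superset_finrank {E : Type*} [NormedAddCommGroup E] [NormedSpace ℝ E]
    [FiniteDimensional ℝ E] (k : ℕ) :
    ∀ (N : Submodule ℝ E), finrank ℝ N ≤ k → k ≤ finrank ℝ E →
    ∃ W : Submodule ℝ E, N ≤ W ∧ finrank ℝ W = k := by
  induction k with
  | zero => intro N h1 _; exact ⟨N, le_rfl, Nat.le_antisymm h1 (Nat.zero_le _)⟩
  | succ k ih =>
    intro N h1 h2
    rcases eq_or_lt_of_le h1 with h | h
    · exact ⟨N, le_rfl, h⟩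
    obtain ⟨W, hNW, hW⟩ := ih N (Nat.lt_succ_iff.mp h) (Nat.le_of_succ_le h2)
    have hlt : finrank ℝ W < finrank ℝ E := by omega
    obtain ⟨x, hx⟩ := Submodule.exists_of_finrank_lt W hlt
    have hxW : x ∉ W := by simpa using hx 1 one_ne_zero
    have hx0 : x ≠ 0 := fun h0 => hxW (h0 ▸ W.zero_mem)
    set V : Submodule ℝ E := W ⊔ Submodule.span ℝ {x} with hV
    refine ⟨V, hNW.trans le_sup_left, ?_⟩
    have hinf : W ⊓ Submodule.span ℝ {x} = ⊥ := by
      rw [Submodule.eq_bot_iff]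
      rintro y ⟨hyW, hys⟩
      obtain ⟨r, rfl⟩ := Submodule.mem_span_singleton.mp hys
      by_contra hne
      exact hx r (fun hr => hne (by simp [hr])) hyW
    have := Submodule.finrank_sup_add_finrank_inf_eq W (Submodule.span ℝ {x})
    rw [hinf, finrank_span_singleton hx0] at this
    rw [← hV] at this
    simp at this
    omega

/-- If the nonempty closed convex sets `K₁, K₂ ⊆ ℝⁿ` have homothetic orthogonal
projections on every `m`-dimensional linear subspace of `ℝⁿ` (`1 ≤ m ≤ n - 1`) and
`K₁` is unbounded, then `K₂` is unbounded as well. -/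
theorem unbounded_of_projections_homothetic_of_unbounded
    (n m : ℕ) (hm₁ : 1 ≤ m) (hm₂ : m ≤ n - 1)
    (K₁ K₂ : Set (EuclideanSpace ℝ (Fin n)))
    (hne₁ : K₁.Nonempty) (hne₂ : K₂.Nonempty)
    (hcl₁ : IsClosed K₁) (hcl₂ : IsClosed K₂)
    (hcv₁ : Convex ℝ K₁) (hcv₂ : Convex ℝ K₂)
    (hub : ¬ Bornology.IsBounded K₁)
    (hproj : ∀ L : Submodule ℝ (EuclideanSpace ℝ (Fin n)),
      Module.finrank ℝ L = m →
      Homothetic ((fun x => (Submodule.orthogonalProjection L x : EuclideanSpace ℝ (Fin n))) '' K₁)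
        ((fun x => (Submodule.orthogonalProjection L x : EuclideanSpace ℝ (Fin n))) '' K₂)) :
    ¬ Bornology.IsBounded K₂ := by
  intro hb2
  apply hub
  have hmn : m < n := by omega
  obtain ⟨C₂, hC₂⟩ := isBounded_iff_forall_norm_le.mp hb2
  -- for each coordinate, an m-dimensional subspace containing the basis vector
  have hsub : ∀ i : Fin n, ∃ L : Submodule ℝ (EuclideanSpace ℝ (Fin n)),
      (EuclideanSpace.single i (1:ℝ)) ∈ L ∧ finrank ℝ L = m := by
    intro i
    have h1 : finrank ℝ (Submodule.span ℝ {EuclideanSpace.single i (1:ℝ)}) ≤ m := by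
      have hne : EuclideanSpace.single i (1:ℝ) ≠ 0 := by
        intro h
        have h1 : ‖EuclideanSpace.single i (1:ℝ)‖ = 1 := by
          rw [EuclideanSpace.norm_single]; simp
        rw [h] at h1; simp at h1
      rw [finrank_span_singleton hne]
      exact hm₁
    obtain ⟨W, hle, hW⟩ := exists_superset_finrank m
      (Submodule.span ℝ {EuclideanSpace.single i (1:ℝ)}) h1
      (by rw [finrank_euclideanSpace_fin]; omega)
    exact ⟨W, hle (Submodule.mem_span_singleton_self _), hW⟩
  choose L hLmem hLrank using hsub
  -- homothety data
  have hhom : ∀ i, ∃ (z : EuclideanSpace ℝ (Fin n)) (l : ℝ), l ≠ 0 ∧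
      ((fun x => (Submodule.orthogonalProjection (L i) x : EuclideanSpace ℝ (Fin n))) '' K₁) =
      (fun x => z + l • x) ''
        ((fun x => (Submodule.orthogonalProjection (L i) x : EuclideanSpace ℝ (Fin n))) '' K₂) :=
    fun i => hproj (L i) (hLrank i)
  choose z l hl heq using hhom
  set C : Fin n → ℝ := fun i => ‖z i‖ + |l i| * C₂ with hC
  have key : ∀ x ∈ K₁, ∀ i, |x i| ≤ C i := by
    intro x hx i
    -- the projection of x lies in the homothetic image
    have hmem : (Submodule.orthogonalProjection (L i) x : EuclideanSpace ℝ (Fin n)) ∈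
        (fun x => z i + l i • x) ''
        ((fun x => (Submodule.orthogonalProjection (L i) x : EuclideanSpace ℝ (Fin n))) '' K₂) := by
      rw [← heq i]; exact ⟨x, hx, rfl⟩
    obtain ⟨w, ⟨y, hy, rfl⟩, hw⟩ := hmem
    have hnormy : ‖(Submodule.orthogonalProjection (L i) y : EuclideanSpace ℝ (Fin n))‖ ≤ ‖y‖ := by
      have := (Submodule.orthogonalProjection (L i)).le_opNorm y
      calc ‖(Submodule.orthogonalProjection (L i) y : EuclideanSpace ℝ (Fin n))‖
          = ‖Submodule.orthogonalProjection (L i) y‖ := rfl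
        _ ≤ ‖Submodule.orthogonalProjection (L i)‖ * ‖y‖ := this
        _ ≤ 1 * ‖y‖ := by
            apply mul_le_mul_of_nonneg_right (Submodule.orthogonalProjectionOnto_norm_le _) (norm_nonneg _)
        _ = ‖y‖ := one_mul _
    have hnp : ‖(Submodule.orthogonalProjection (L i) x : EuclideanSpace ℝ (Fin n))‖ ≤ C i := by
      rw [← hw]
      calc ‖z i + l i • (Submodule.orthogonalProjection (L i) y : EuclideanSpace ℝ (Fin n))‖
          ≤ ‖z i‖ + ‖l i • (Submodule.orthogonalProjection (L i) y : EuclideanSpace ℝ (Fin n))‖ :=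
            norm_add_le _ _
        _ = ‖z i‖ + |l i| * ‖(Submodule.orthogonalProjection (L i) y : EuclideanSpace ℝ (Fin n))‖ := by
            rw [norm_smul, Real.norm_eq_abs]
        _ ≤ ‖z i‖ + |l i| * C₂ := by
            have : ‖(Submodule.orthogonalProjection (L i) y : EuclideanSpace ℝ (Fin n))‖ ≤ C₂ :=
              hnormy.trans (hC₂ y hy)
            nlinarith [abs_nonneg (l i)]
    -- |x i| = |⟪x, e i⟫| = |⟪π x, e i⟫| ≤ ‖π x‖
    have hip : (inner ℝ x (EuclideanSpace.single i (1:ℝ)) : ℝ) =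
        inner ℝ ((Submodule.orthogonalProjection (L i) x : EuclideanSpace ℝ (Fin n)))
          (EuclideanSpace.single i (1:ℝ)) := by
      have horth : x - (Submodule.orthogonalProjection (L i) x : EuclideanSpace ℝ (Fin n)) ∈ (L i)ᗮ :=
        (L i).sub_starProjection_mem_orthogonal x
      have h0 : (inner ℝ (x - (Submodule.orthogonalProjection (L i) x : EuclideanSpace ℝ (Fin n)))
          (EuclideanSpace.single i (1:ℝ)) : ℝ) = 0 :=
        Submodule.inner_left_of_mem_orthogonal (hLmem i) horth
      rw [inner_sub_left] at h0
      linarith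
    have hxi : (inner ℝ x (EuclideanSpace.single i (1:ℝ)) : ℝ) = x i := by
      rw [EuclideanSpace.inner_single_right]
      simp
    have habs : |x i| ≤ ‖(Submodule.orthogonalProjection (L i) x : EuclideanSpace ℝ (Fin n))‖ := by
      rw [← hxi, hip]
      calc |(inner ℝ ((Submodule.orthogonalProjection (L i) x : EuclideanSpace ℝ (Fin n)))
            (EuclideanSpace.single i (1:ℝ)) : ℝ)|
          ≤ ‖(Submodule.orthogonalProjection (L i) x : EuclideanSpace ℝ (Fin n))‖ *
            ‖EuclideanSpace.single i (1:ℝ)‖ := abs_real_inner_le_norm _ _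
        _ = ‖(Submodule.orthogonalProjection (L i) x : EuclideanSpace ℝ (Fin n))‖ := by
            rw [EuclideanSpace.norm_single]; simp
    exact habs.trans hnp
  -- conclude K₁ bounded
  rw [isBounded_iff_forall_norm_le]
  refine ⟨Real.sqrt (∑ i, (C i)^2), fun x hx => ?_⟩
  rw [EuclideanSpace.norm_eq]
  apply Real.sqrt_le_sqrt
  apply Finset.sum_le_sum
  intro i _
  have := key x hx i
  have h0 : ‖x i‖ = |x i| := rfl
  rw [h0]
  exact pow_le_pow_left₀ (abs_nonneg _) this 2
end
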